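/- There exists a uniform constant C > 0 such that for every M > 0, E(p_M||q_M) ≤ C·M, where q_M = min(2, q') with q' > 1 solving E(1||q') = M, and p_M is the infimum of p ≥ 0 with E(p||1) ≤ M. -/

import Mathlib

noncomputable def E (p q : ℝ) : ℝ := p * Real.log (p / q) - (p - q)

/-- `E` extended by `E(0‖q) = q`. -/
noncomputable def Eext (p q : ℝ) : ℝ := if p = 0 then q else E p q

lemma lemA {p : ℝ} (h0 : 0 ≤ p) (h1 : p ≤ 1) :
    (1 - p) ^ 2 ≤ 2 * (p * Real.log p - (p - 1)) := by
  set h : ℝ → ℝ := fun x => x * Real.log x - (x - 1) - (1 - x) ^ 2 / 2 with hh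
  have hd : ∀ x ∈ Set.Ioo (0:ℝ) 1, HasDerivAt h (Real.log x - x + 1) x := by
    intro x hx
    have H1 := Real.hasDerivAt_mul_log (ne_of_gt hx.1)
    have H2 : HasDerivAt (fun x : ℝ => x - 1) 1 x := (hasDerivAt_id x).sub_const 1
    have H3 : HasDerivAt (fun x : ℝ => (1 - x) ^ 2 / 2) (x - 1) x := by
      have h4 : HasDerivAt (fun x : ℝ => 1 - x) (-1) x :=
        (hasDerivAt_const x 1).sub (hasDerivAt_id x) |>.congr_deriv (by ring)
      have := (h4.pow 2).div_const 2
      refine this.congr_deriv ?_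
      ring
    have := (H1.sub H2).sub H3
    refine this.congr_deriv ?_
    ring
  have anti : AntitoneOn h (Set.Icc 0 1) := by
    apply antitoneOn_of_deriv_nonpos (convex_Icc 0 1)
    · exact ((Real.continuous_mul_log.sub (continuous_id.sub continuous_const)).sub
        (((continuous_const.sub continuous_id).pow 2).div_const 2)).continuousOn
    · intro x hx
      rw [interior_Icc] at hx
      exact (hd x hx).differentiableAt.differentiableWithinAt
    · intro x hx
      rw [interior_Icc] at hx
      rw [(hd x hx).deriv]
      have := Real.log_le_sub_one_of_pos hx.1
      linarith
  have key : h 1 ≤ h p :=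
    anti (Set.mem_Icc.mpr ⟨h0, h1⟩) (Set.right_mem_Icc.mpr zero_le_one) h1
  simp only [hh, Real.log_one] at key
  nlinarith [key]

lemma lemB {q : ℝ} (h1 : 1 ≤ q) (h2 : q ≤ 2) :
    (q - 1) ^ 2 ≤ 4 * (q - 1 - Real.log q) := by
  set k : ℝ → ℝ := fun x => x - 1 - Real.log x - (x - 1) ^ 2 / 4 with hk
  have hd : ∀ x ∈ Set.Ioo (1:ℝ) 2, HasDerivAt k (1 - 1/x - (x - 1)/2) x := by
    intro x hx
    have hx0 : (0:ℝ) < x := lt_trans one_pos hx.1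
    have H1 : HasDerivAt (fun x : ℝ => x - 1) 1 x := (hasDerivAt_id x).sub_const 1
    have H2 := Real.hasDerivAt_log (ne_of_gt hx0)
    have H3 : HasDerivAt (fun x : ℝ => (x - 1) ^ 2 / 4) ((x - 1)/2) x := by
      have := (H1.pow 2).div_const 4
      refine this.congr_deriv ?_
      ring
    have := (H1.sub H2).sub H3
    refine this.congr_deriv ?_
    ring
  have mono : MonotoneOn k (Set.Icc 1 2) := by
    apply monotoneOn_of_deriv_nonneg (convex_Icc 1 2)
    · refine ((continuousOn_id.sub continuousOn_const).sub
        (Real.continuousOn_log.mono ?_)).sub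
        (((continuousOn_id.sub continuousOn_const).pow 2).div_const 4)
      intro x hx
      have : (1:ℝ) ≤ x := hx.1
      simp only [Set.mem_compl_iff, Set.mem_singleton_iff]
      linarith
    · intro x hx
      rw [interior_Icc] at hx
      exact (hd x hx).differentiableAt.differentiableWithinAt
    · intro x hx
      rw [interior_Icc] at hx
      rw [(hd x hx).deriv]
      have hx0 : (0:ℝ) < x := lt_trans one_pos hx.1
      have h5 : 1 - 1/x = (x - 1)/x := by field_simp
      rw [h5]
      have : (x - 1)/x - (x - 1)/2 = (x - 1) * (2 - x) / (2 * x) := by field_simp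
      rw [this]
      apply div_nonneg
      · nlinarith [hx.1, hx.2]
      · linarith
  have key : k 1 ≤ k q := mono (Set.left_mem_Icc.mpr (by norm_num))
    (Set.mem_Icc.mpr ⟨h1, h2⟩) h1
  simp only [hk, Real.log_one] at key
  nlinarith [key]

theorem uniform_relative_bound_upper :
    ∃ C : ℝ, 0 < C ∧ ∀ M : ℝ, 0 < M → ∀ q' : ℝ,
      1 < q' → Real.log (1 / q') - (1 - q') = M →
      Eext (sInf {p : ℝ | 0 ≤ p ∧ p * Real.log p - (p - 1) ≤ M}) (min 2 q')
        ≤ C * M := by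
  refine ⟨5, by norm_num, ?_⟩
  intro M hM q' hq' hEq
  set S := {p : ℝ | 0 ≤ p ∧ p * Real.log p - (p - 1) ≤ M} with hS
  have h1S : (1:ℝ) ∈ S := by
    constructor
    · norm_num
    · simp [Real.log_one]; linarith
  have hbdd : BddBelow S := ⟨0, fun x hx => hx.1⟩
  have hclosed : IsClosed S := by
    rw [hS, Set.setOf_and]
    exact (isClosed_le continuous_const continuous_id).inter
      (isClosed_le (Real.continuous_mul_log.sub (continuous_id.sub continuous_const))
        continuous_const)
  have hmem : sInf S ∈ S := hclosed.csInf_mem ⟨1, h1S⟩ hbdd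
  obtain ⟨hp0, hpf⟩ := hmem
  have hp1 : sInf S ≤ 1 := csInf_le hbdd h1S
  set p := sInf S with hp
  set q := min 2 q' with hqdef
  have hq1 : 1 < q := lt_min (by norm_num) hq'
  have hq0 : (0:ℝ) < q := lt_trans one_pos hq1
  have hq2 : q ≤ 2 := min_le_left _ _
  have hqq' : q ≤ q' := min_le_right _ _
  have hM' : q' - 1 - Real.log q' = M := by
    rw [one_div, Real.log_inv] at hEq; linarith
  have hq'0 : (0:ℝ) < q' := lt_trans one_pos hq'
  have hgq : q - 1 - Real.log q ≤ M := by
    have hdiv : (0:ℝ) < q' / q := div_pos hq'0 hq0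
    have hl := Real.log_le_sub_one_of_pos hdiv
    rw [Real.log_div (ne_of_gt hq'0) (ne_of_gt hq0)] at hl
    have h2 : q' / q - 1 ≤ q' - q := by
      rw [div_sub_one (ne_of_gt hq0), div_le_iff₀ hq0]
      nlinarith
    linarith
  have hfp : (1 - p) ^ 2 ≤ 2 * M := le_trans (lemA hp0 hp1) (by linarith)
  have hgq2 : (q - 1) ^ 2 ≤ 4 * M := le_trans (lemB (le_of_lt hq1) hq2) (by linarith)
  by_cases hpz : p = 0
  · rw [Eext, if_pos hpz]
    rw [hpz] at hpf
    simp [Real.log_zero] at hpf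
    have : q ≤ 2 := hq2
    linarith
  · have hp' : 0 < p := lt_of_le_of_ne hp0 (Ne.symm hpz)
    rw [Eext, if_neg hpz, E, Real.log_div hpz (ne_of_gt hq0)]
    have hlq : Real.log q ≤ q - 1 := Real.log_le_sub_one_of_pos hq0
    have hlq0 : 0 ≤ Real.log q := Real.log_nonneg (le_of_lt hq1)
    have hA : (1 - p) * Real.log q ≤ (1 - p) * (q - 1) :=
      mul_le_mul_of_nonneg_left hlq (by linarith)
    have h3 : (1 - p) * (q - 1) ≤ 3 * M := by nlinarith [hfp, hgq2]
    nlinarith [hpf, hgq, hA, h3]
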